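/- There exists a constant c > 0 such that for every real x ≥ 1, the series f(x) = Σ_{m=0}^∞ x^m / (Γ(1 + m/2) · m!) satisfies f(x) ≤ exp(c^{1/3} · x^{2/3}). -/

import Mathlib

private lemma gamma_half_ge (k : ℕ) :
    (k.factorial : ℝ) / 2 ≤ Real.Gamma ((k : ℝ) + 3 / 2) := by
  induction k with
  | zero =>
    have h1 : ((0 : ℕ) : ℝ) + 3 / 2 = 1 / 2 + 1 := by norm_num
    rw [h1, Real.Gamma_add_one (by norm_num), Real.Gamma_one_half_eq]
    have : (1 : ℝ) ≤ Real.sqrt Real.pi := by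
      rw [show (1:ℝ) = Real.sqrt 1 by simp]
      exact Real.sqrt_le_sqrt (by linarith [Real.pi_gt_three])
    simp only [Nat.factorial_zero, Nat.cast_one]
    nlinarith
  | succ k ih =>
    have hne : ((k : ℝ) + 3 / 2) ≠ 0 := by positivity
    have hstep : Real.Gamma (((k + 1 : ℕ) : ℝ) + 3 / 2)
        = ((k : ℝ) + 3 / 2) * Real.Gamma ((k : ℝ) + 3 / 2) := by
      rw [← Real.Gamma_add_one hne]
      push_cast
      ring_nf
    rw [hstep]
    have hfac : (((k + 1 : ℕ)).factorial : ℝ) = ((k : ℝ) + 1) * (k.factorial : ℝ) := by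
      rw [Nat.factorial_succ]; push_cast; ring
    rw [hfac]
    have hΓpos : 0 < Real.Gamma ((k : ℝ) + 3 / 2) :=
      Real.Gamma_pos_of_pos (by positivity)
    have hk0 : (0 : ℝ) ≤ (k : ℝ) := Nat.cast_nonneg k
    have hfk : (0 : ℝ) ≤ (k.factorial : ℝ) := Nat.cast_nonneg _
    nlinarith

private lemma fac3_le (k : ℕ) :
    (3 * k).factorial ≤ 8 ^ k * (k.factorial * (2 * k).factorial) := by
  have h1 : (3 * k).choose k * k.factorial * (3 * k - k).factorial = (3 * k).factorial :=
    Nat.choose_mul_factorial_mul_factorial (by omega)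
  have h2 : (3 * k).choose k ≤ 2 ^ (3 * k) := by
    calc (3 * k).choose k ≤ ∑ m ∈ Finset.range (3 * k + 1), (3 * k).choose m :=
          Finset.single_le_sum (fun i _ => Nat.zero_le _) (Finset.mem_range.mpr (by omega))
      _ = 2 ^ (3 * k) := Nat.sum_range_choose _
  have h3 : 3 * k - k = 2 * k := by omega
  rw [h3] at h1
  calc (3 * k).factorial = (3 * k).choose k * k.factorial * (2 * k).factorial := h1.symm
    _ ≤ 2 ^ (3 * k) * k.factorial * (2 * k).factorial := by
        exact Nat.mul_le_mul_right _ (Nat.mul_le_mul_right _ h2)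
    _ = 8 ^ k * (k.factorial * (2 * k).factorial) := by
        rw [pow_mul]; norm_num; ring

theorem stmt_1 :
    ∃ c : ℝ, 0 < c ∧ ∀ x : ℝ, 1 ≤ x →
      (∑' m : ℕ, x ^ m / (Real.Gamma (1 + (m : ℝ) / 2) * (Nat.factorial m : ℝ)))
        ≤ Real.exp (c ^ ((1 : ℝ) / 3) * x ^ ((2 : ℝ) / 3)) := by
  refine ⟨64, by norm_num, fun x hx => ?_⟩
  have hx0 : (0 : ℝ) ≤ x := by linarith
  set t : ℝ := x ^ ((2 : ℝ) / 3) with ht_def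
  have ht0 : 0 ≤ t := Real.rpow_nonneg hx0 _
  have ht1 : 1 ≤ t := by
    calc (1 : ℝ) = 1 ^ ((2 : ℝ) / 3) := (Real.one_rpow _).symm
      _ ≤ x ^ ((2 : ℝ) / 3) := Real.rpow_le_rpow (by norm_num) hx (by norm_num)
  -- power identity
  have hpow : ∀ n m : ℕ, ((2 : ℝ) / 3) * (n : ℝ) = (m : ℝ) → x ^ m = t ^ n := by
    intro n m h
    rw [← Real.rpow_natCast t n, ← Real.rpow_natCast x m, ht_def,
      ← Real.rpow_mul hx0, h]
  have hteven : ∀ k : ℕ, x ^ (2 * k) = t ^ (3 * k) := by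
    intro k; exact hpow (3 * k) (2 * k) (by push_cast; ring)
  have htodd : ∀ k : ℕ, x ^ (2 * k + 1) ≤ t ^ (3 * k + 2) := by
    intro k
    have h1 : x ^ (2 * k + 1) = x ^ ((2 * k + 1 : ℕ) : ℝ) :=
      (Real.rpow_natCast x _).symm
    have h2 : t ^ (3 * k + 2) = x ^ (((2 : ℝ) / 3) * ((3 * k + 2 : ℕ) : ℝ)) := by
      rw [← Real.rpow_natCast t (3 * k + 2), ht_def, ← Real.rpow_mul hx0]
    rw [h1, h2]
    apply Real.rpow_le_rpow_of_exponent_le hx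
    push_cast; nlinarith [Nat.cast_nonneg (α := ℝ) k]
  set f : ℕ → ℝ := fun m => x ^ m / (Real.Gamma (1 + (m : ℝ) / 2) * (m.factorial : ℝ))
    with hf_def
  have hΓpos : ∀ m : ℕ, 0 < Real.Gamma (1 + (m : ℝ) / 2) := by
    intro m; exact Real.Gamma_pos_of_pos (by positivity)
  have hf0 : ∀ m, 0 ≤ f m := fun m =>
    div_nonneg (pow_nonneg hx0 _) (mul_nonneg (hΓpos m).le (Nat.cast_nonneg _))
  -- Gamma at even/odd arguments
  have hΓe : ∀ k : ℕ, Real.Gamma (1 + ((2 * k : ℕ) : ℝ) / 2) = (k.factorial : ℝ) := by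
    intro k
    rw [show (1 + ((2 * k : ℕ) : ℝ) / 2) = (k : ℝ) + 1 by push_cast; ring,
      Real.Gamma_nat_eq_factorial]
  have hΓo : ∀ k : ℕ, (k.factorial : ℝ) / 2 ≤ Real.Gamma (1 + ((2 * k + 1 : ℕ) : ℝ) / 2) := by
    intro k
    rw [show (1 + ((2 * k + 1 : ℕ) : ℝ) / 2) = (k : ℝ) + 3 / 2 by push_cast; ring]
    exact gamma_half_ge k
  have hΓlb : ∀ m : ℕ, (1 : ℝ) / 2 ≤ Real.Gamma (1 + (m : ℝ) / 2) := by
    intro m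
    rcases Nat.even_or_odd m with ⟨k, hk⟩ | ⟨k, hk⟩
    · have hm : m = 2 * k := by omega
      rw [hm, hΓe k]
      have : 1 ≤ k.factorial := Nat.one_le_iff_ne_zero.mpr (Nat.factorial_ne_zero k)
      have : (1 : ℝ) ≤ (k.factorial : ℝ) := by exact_mod_cast this
      linarith
    · rw [hk]
      refine le_trans ?_ (hΓo k)
      have : 1 ≤ k.factorial := Nat.one_le_iff_ne_zero.mpr (Nat.factorial_ne_zero k)
      have : (1 : ℝ) ≤ (k.factorial : ℝ) := by exact_mod_cast this
      linarith
  -- summability of f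
  have hsum : Summable f := by
    refine Summable.of_nonneg_of_le hf0 (fun m => ?_)
      ((Real.summable_pow_div_factorial x).mul_left 2)
    have hfm : (0 : ℝ) < (m.factorial : ℝ) := by
      exact_mod_cast Nat.factorial_pos m
    have h1 : (1 / 2 : ℝ) * (m.factorial : ℝ) ≤ Real.Gamma (1 + (m : ℝ) / 2) * (m.factorial : ℝ) :=
      mul_le_mul_of_nonneg_right (hΓlb m) hfm.le
    calc f m ≤ x ^ m / ((1 / 2 : ℝ) * (m.factorial : ℝ)) := by
          apply div_le_div_of_nonneg_left (pow_nonneg hx0 _) (by positivity) h1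
      _ = 2 * (x ^ m / (m.factorial : ℝ)) := by field_simp
  have he_s : Summable (fun k => f (2 * k)) :=
    hsum.comp_injective (fun a b h => by omega)
  have ho_s : Summable (fun k => f (2 * k + 1)) :=
    hsum.comp_injective (fun a b h => by omega)
  -- comparison series
  set g : ℕ → ℝ := fun k => (2 * t) ^ (3 * k) / ((3 * k).factorial : ℝ) with hg_def
  have hg0 : ∀ k, 0 ≤ g k := fun k =>
    div_nonneg (pow_nonneg (by positivity) _) (Nat.cast_nonneg _)
  have hg_s : Summable g :=
    (Real.summable_pow_div_factorial (2 * t)).comp_injective (fun a b h => by omega)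
  have hg_le : ∑' k, g k ≤ Real.exp (2 * t) := by
    rw [Real.exp_eq_exp_ℝ, NormedSpace.exp_eq_tsum_div]
    exact Summable.tsum_le_tsum_of_inj (fun k => 3 * k) (fun a b h => by simpa using h)
      (fun c _ => div_nonneg (pow_nonneg (by positivity) _) (Nat.cast_nonneg _))
      (fun k => le_rfl) hg_s (Real.summable_pow_div_factorial (2 * t))
  have hg_tsum0 : 0 ≤ ∑' k, g k := tsum_nonneg hg0
  -- key factorial bound as reals
  have hkey : ∀ k : ℕ, ((3 * k).factorial : ℝ)
      ≤ 8 ^ k * ((k.factorial : ℝ) * ((2 * k).factorial : ℝ)) := by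
    intro k; exact_mod_cast fac3_le k
  have h2t : ∀ k : ℕ, (2 * t) ^ (3 * k) = 8 ^ k * t ^ (3 * k) := by
    intro k
    rw [mul_pow, show (2 : ℝ) ^ (3 * k) = 8 ^ k by rw [pow_mul]; norm_num]
  -- even termwise bound
  have heven : ∀ k : ℕ, f (2 * k) ≤ g k := by
    intro k
    have hfe : f (2 * k) = x ^ (2 * k) / ((k.factorial : ℝ) * ((2 * k).factorial : ℝ)) := by
      rw [hf_def]; simp only []; rw [hΓe k]
    rw [hfe, hg_def]
    have hd1 : (0 : ℝ) < (k.factorial : ℝ) * ((2 * k).factorial : ℝ) := by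
      have := Nat.factorial_pos k; have := Nat.factorial_pos (2 * k); positivity
    have hd2 : (0 : ℝ) < ((3 * k).factorial : ℝ) := by exact_mod_cast Nat.factorial_pos _
    rw [div_le_div_iff₀ hd1 hd2, h2t k, ← hteven k]
    nlinarith [mul_le_mul_of_nonneg_left (hkey k) (pow_nonneg hx0 (2 * k))]
  -- odd termwise bound
  have hodd : ∀ k : ℕ, f (2 * k + 1) ≤ 2 * t ^ 2 * g k := by
    intro k
    have hΓ := hΓo k
    have hΓp : (0 : ℝ) < Real.Gamma (1 + ((2 * k + 1 : ℕ) : ℝ) / 2) := hΓpos (2 * k + 1)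
    have hfk : (0 : ℝ) < (k.factorial : ℝ) := by exact_mod_cast Nat.factorial_pos k
    have hf2k : (0 : ℝ) < ((2 * k).factorial : ℝ) := by exact_mod_cast Nat.factorial_pos _
    have hf2k1 : (0 : ℝ) < ((2 * k + 1).factorial : ℝ) := by exact_mod_cast Nat.factorial_pos _
    have hfacle : ((2 * k).factorial : ℝ) ≤ ((2 * k + 1).factorial : ℝ) := by
      exact_mod_cast Nat.factorial_le (by omega)
    have hf3k : (0 : ℝ) < ((3 * k).factorial : ℝ) := by exact_mod_cast Nat.factorial_pos _
    have step1 : f (2 * k + 1)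
        ≤ t ^ (3 * k + 2) / (((k.factorial : ℝ) / 2) * ((2 * k).factorial : ℝ)) := by
      rw [hf_def]
      refine div_le_div₀ (by positivity) (htodd k) (by positivity) ?_
      exact mul_le_mul hΓ hfacle hf2k.le hΓp.le
    have step2 : t ^ (3 * k + 2) / (((k.factorial : ℝ) / 2) * ((2 * k).factorial : ℝ))
        ≤ 2 * t ^ 2 * ((2 * t) ^ (3 * k) / (((3 * k).factorial : ℝ))) := by
      have hrw : t ^ (3 * k + 2) = t ^ 2 * t ^ (3 * k) := by
        rw [pow_add]; ring
      rw [← mul_div_assoc, div_le_div_iff₀ (by positivity) hf3k, h2t k, hrw]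
      nlinarith [mul_le_mul_of_nonneg_left (hkey k)
        (mul_nonneg (pow_nonneg ht0 2) (pow_nonneg ht0 (3 * k)))]
    exact le_trans step1 step2
  -- assemble
  have hsplit : ∑' m, f m = (∑' k, f (2 * k)) + ∑' k, f (2 * k + 1) :=
    (tsum_even_add_odd he_s ho_s).symm
  have hE : (∑' k, f (2 * k)) ≤ ∑' k, g k := he_s.tsum_le_tsum heven hg_s
  have hO : (∑' k, f (2 * k + 1)) ≤ 2 * t ^ 2 * ∑' k, g k := by
    calc (∑' k, f (2 * k + 1)) ≤ ∑' k, 2 * t ^ 2 * g k :=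
          ho_s.tsum_le_tsum hodd (hg_s.mul_left _)
      _ = 2 * t ^ 2 * ∑' k, g k := tsum_mul_left
  have hquad : 1 + 2 * t ^ 2 ≤ Real.exp (2 * t) := by
    have ha := Real.add_one_le_exp (t - 1)
    have ha0 : 0 < Real.exp (t - 1) := Real.exp_pos _
    have hb : (2 : ℝ) ≤ Real.exp 1 := by
      have := Real.add_one_le_exp 1; linarith
    have hexp : Real.exp (2 * t) = Real.exp (t - 1) * Real.exp (t - 1)
        * (Real.exp 1 * Real.exp 1) := by
      rw [← Real.exp_add, ← Real.exp_add, ← Real.exp_add]; ring_nf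
    have hta : t ≤ Real.exp (t - 1) := by linarith
    have ht2a : t * t ≤ Real.exp (t - 1) * Real.exp (t - 1) :=
      mul_le_mul hta hta (by linarith) ha0.le
    have hB2 : (4 : ℝ) ≤ Real.exp 1 * Real.exp 1 := by nlinarith [Real.exp_pos 1]
    have hfinal : t * t * 4 ≤ Real.exp (t - 1) * Real.exp (t - 1)
        * (Real.exp 1 * Real.exp 1) :=
      mul_le_mul ht2a hB2 (by norm_num) (mul_nonneg ha0.le ha0.le)
    nlinarith [hfinal, ht1, sq_nonneg (t - 1)]
  calc (∑' m, f m) = (∑' k, f (2 * k)) + ∑' k, f (2 * k + 1) := hsplit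
    _ ≤ (∑' k, g k) + 2 * t ^ 2 * ∑' k, g k := add_le_add hE hO
    _ = (1 + 2 * t ^ 2) * ∑' k, g k := by ring
    _ ≤ Real.exp (2 * t) * Real.exp (2 * t) :=
        mul_le_mul hquad hg_le hg_tsum0 (Real.exp_pos _).le
    _ = Real.exp (4 * t) := by rw [← Real.exp_add]; ring_nf
    _ = Real.exp ((64 : ℝ) ^ ((1 : ℝ) / 3) * x ^ ((2 : ℝ) / 3)) := by
        congr 1
        have h64 : (64 : ℝ) ^ ((1 : ℝ) / 3) = 4 := by
          rw [show (64 : ℝ) = 4 ^ (3 : ℕ) by norm_num, ← Real.rpow_natCast 4 3,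
            ← Real.rpow_mul (by norm_num : (0 : ℝ) ≤ 4)]
          norm_num
        rw [h64, ht_def]
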